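/- arXiv:2512.06545 — 2 statements merged into one kernel-verified Lean document; each statement's English description precedes it below -/
import Mathlib

section
/- There exist permutations σ₁, σ₂, σ₃ of {1, …, 30} such that σ₁ ∘ σ₂ ∘ σ₃ = id, the subgroup generated by σ₁, σ₂, σ₃ acts transitively on {1, …, 30}, and the multisets of orbit sizes of the cyclic groups generated by σ₁, σ₂, σ₃ are, respectively, {8,4,4,4,2,2,2,1,1,1,1}, {14,5,3,2,2,2,1,1}, and {14,6,6,1,1,1,1}. -/
/-- The number of orbits of the cyclic group generated by a permutation `σ`
(i.e., the number of cycles of `σ`, counting fixed points as cycles of length 1). -/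
noncomputable def cycleCount {α : Type*} [Finite α] (σ : Equiv.Perm α) : ℕ :=
  Nat.card (MulAction.orbitRel.Quotient (Subgroup.zpowers σ) α)

/-- The multiset of sizes of the orbits of the cyclic group generated by a permutation `σ`
(i.e., the cycle type of `σ`, with fixed points contributing parts equal to 1). -/
noncomputable def orbitSizes {α : Type*} [Finite α] (σ : Equiv.Perm α) : Multiset ℕ :=
  letI := Fintype.ofFinite (MulAction.orbitRel.Quotient (Subgroup.zpowers σ) α)
  (Finset.univ : Finset (MulAction.orbitRel.Quotient (Subgroup.zpowers σ) α)).val.map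
    fun q => Nat.card q.orbit

open MulAction Function

set_option linter.unusedSectionVars false

section General

variable {α : Type*} [Fintype α] [DecidableEq α] (σ : Equiv.Perm α)

lemma perm_mem_periodicPts (x : α) : x ∈ periodicPts ⇑σ :=
  ⟨orderOf σ, orderOf_pos σ, by
    show (⇑σ)^[orderOf σ] x = x
    rw [Equiv.Perm.iterate_eq_pow, pow_orderOf_eq_one]; rfl⟩

lemma card_orbit_zpowers (x : α) :
    Nat.card (MulAction.orbit (Subgroup.zpowers σ) x) = minimalPeriod ⇑σ x := by
  rw [Nat.card_congr (MulAction.orbitZPowersEquiv σ x), Nat.card_zmod]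
  rfl

lemma minimalPeriod_le_card (x : α) : minimalPeriod ⇑σ x ≤ Fintype.card α := by
  rw [← card_orbit_zpowers σ x, ← Nat.card_eq_fintype_card]
  exact Nat.card_le_card_of_injective _ Subtype.val_injective

lemma mem_orbit_zpowers_iff {x y : α} :
    x ∈ MulAction.orbit (Subgroup.zpowers σ) y ↔
      ∃ k < Fintype.card α, (⇑σ)^[k] y = x := by
  constructor
  · rintro ⟨g, hg⟩
    obtain ⟨k, hk⟩ := mem_powers_iff_mem_zpowers.2 g.2
    have hk' : σ ^ k = (g : Equiv.Perm α) := hk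
    have hx : (⇑σ)^[k] y = x := by
      rw [Equiv.Perm.iterate_eq_pow, hk']
      exact hg
    refine ⟨k % minimalPeriod ⇑σ y, ?_, ?_⟩
    · exact lt_of_lt_of_le
        (Nat.mod_lt _ (minimalPeriod_pos_of_mem_periodicPts (perm_mem_periodicPts σ y)))
        (minimalPeriod_le_card σ y)
    · rw [iterate_mod_minimalPeriod_eq]; exact hx
  · rintro ⟨k, _, hk⟩
    exact ⟨⟨σ ^ k, (Subgroup.zpowers σ).pow_mem (Subgroup.mem_zpowers σ) k⟩, hk⟩

lemma minimalPeriod_eq_of_iterate {x : α} {n : ℕ} (h : (⇑σ)^[n] x = x) (hn : 0 < n)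
    (hm : ∀ m < n, 0 < m → (⇑σ)^[m] x ≠ x) : minimalPeriod ⇑σ x = n := by
  have hper : IsPeriodicPt ⇑σ n x := h
  refine le_antisymm (hper.minimalPeriod_le hn) ?_
  by_contra hlt
  push_neg at hlt
  exact hm _ hlt (minimalPeriod_pos_of_mem_periodicPts (perm_mem_periodicPts σ x))
    (isPeriodicPt_minimalPeriod ⇑σ x)

lemma orbitSizes_eq_of_reps (reps : List α)
    (h1 : reps.Pairwise (fun r s => ∀ k < Fintype.card α, (⇑σ)^[k] s ≠ r))
    (h2 : ∀ x : α, ∃ r ∈ reps, ∃ k < Fintype.card α, (⇑σ)^[k] r = x) :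
    orbitSizes σ = ↑(reps.map fun r => minimalPeriod ⇑σ r) := by
  classical
  set mk : α → MulAction.orbitRel.Quotient (Subgroup.zpowers σ) α := Quotient.mk'' with hmk
  letI : Fintype (MulAction.orbitRel.Quotient (Subgroup.zpowers σ) α) :=
    Fintype.ofFinite _
  have hcard : ∀ r : α,
      Nat.card (MulAction.orbitRel.Quotient.orbit
        (mk r)) =
      minimalPeriod ⇑σ r := by
    intro r
    rw [MulAction.orbitRel.Quotient.orbit_mk, card_orbit_zpowers]
  have huniv : (Finset.univ :
      Finset (MulAction.orbitRel.Quotient (Subgroup.zpowers σ) α)).val =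
      ((reps.map mk : List _) : Multiset _) := by
    have key : ∀ r x : α, mk r = mk x ↔
        ∃ k < Fintype.card α, (⇑σ)^[k] x = r := by
      intro r x
      rw [hmk, Quotient.eq'']
      show MulAction.orbitRel _ _ r x ↔ _
      rw [MulAction.orbitRel_apply, mem_orbit_zpowers_iff]
    have hnd : ((reps.map mk : List _) :
        Multiset (MulAction.orbitRel.Quotient (Subgroup.zpowers σ) α)).Nodup := by
      rw [Multiset.coe_nodup, List.Nodup, List.pairwise_map]
      refine h1.imp ?_
      intro r s hrs heq
      obtain ⟨k, hk, hkr⟩ := (key r s).1 heq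
      exact hrs k hk hkr
    refine (Multiset.Nodup.ext Finset.univ.nodup hnd).2 fun q => ?_
    simp only [Finset.mem_univ, true_iff, Multiset.mem_coe, List.mem_map]
    obtain ⟨x, rfl⟩ := Quotient.exists_rep q
    constructor
    · intro _
      obtain ⟨r, hr, k, hk, hkr⟩ := h2 x
      exact ⟨r, hr, ((key x r).2 ⟨k, hk, hkr⟩).symm⟩
    · intro _
      exact Finset.mem_univ _
  show Multiset.map _ (Finset.univ.val) = _
  rw [huniv]
  simp only [Multiset.map_coe, List.map_map]
  congr 1
  exact List.map_congr_left fun r _ => hcard r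

end General


section Concrete

def f1 : Fin 30 → Fin 30 := ![20, 11, 9, 18, 19, 23, 4, 12, 0, 5, 7, 1, 8, 14, 13, 25, 16, 17, 3, 28, 27, 10, 15, 2, 24, 26, 22, 21, 6, 29]
def g1 : Fin 30 → Fin 30 := ![8, 11, 23, 18, 6, 9, 28, 10, 12, 2, 21, 1, 7, 14, 13, 22, 16, 17, 3, 4, 0, 27, 26, 5, 24, 15, 25, 20, 19, 29]
def s1 : Equiv.Perm (Fin 30) := ⟨f1, g1, by decide, by decide⟩

def f2 : Fin 30 → Fin 30 := ![8, 21, 2, 20, 7, 10, 14, 13, 3, 4, 6, 0, 12, 24, 16, 28, 11, 26, 22, 29, 17, 27, 18, 5, 9, 23, 25, 1, 15, 19]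
def g2 : Fin 30 → Fin 30 := ![11, 27, 2, 8, 9, 23, 10, 4, 0, 24, 5, 16, 12, 7, 6, 28, 14, 20, 22, 29, 3, 1, 18, 25, 13, 26, 17, 21, 15, 19]
def s2 : Equiv.Perm (Fin 30) := ⟨f2, g2, by decide, by decide⟩

def f3 : Fin 30 → Fin 30 := ![0, 16, 25, 22, 10, 24, 15, 5, 12, 2, 1, 27, 4, 6, 7, 18, 14, 20, 8, 9, 11, 21, 17, 23, 13, 28, 26, 3, 29, 19]
def g3 : Fin 30 → Fin 30 := ![0, 10, 9, 27, 12, 7, 13, 14, 18, 19, 4, 20, 8, 24, 16, 6, 1, 22, 15, 29, 17, 21, 3, 23, 5, 2, 26, 11, 25, 28]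
def s3 : Equiv.Perm (Fin 30) := ⟨f3, g3, by decide, by decide⟩

lemma mp1_0 : Function.minimalPeriod ⇑s1 (0 : Fin 30) = 8 :=
  minimalPeriod_eq_of_iterate s1 (by decide) (by norm_num) (by decide)

lemma mp1_2 : Function.minimalPeriod ⇑s1 (2 : Fin 30) = 4 :=
  minimalPeriod_eq_of_iterate s1 (by decide) (by norm_num) (by decide)

lemma mp1_4 : Function.minimalPeriod ⇑s1 (4 : Fin 30) = 4 :=
  minimalPeriod_eq_of_iterate s1 (by decide) (by norm_num) (by decide)

lemma mp1_15 : Function.minimalPeriod ⇑s1 (15 : Fin 30) = 4 :=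
  minimalPeriod_eq_of_iterate s1 (by decide) (by norm_num) (by decide)

lemma mp1_1 : Function.minimalPeriod ⇑s1 (1 : Fin 30) = 2 :=
  minimalPeriod_eq_of_iterate s1 (by decide) (by norm_num) (by decide)

lemma mp1_3 : Function.minimalPeriod ⇑s1 (3 : Fin 30) = 2 :=
  minimalPeriod_eq_of_iterate s1 (by decide) (by norm_num) (by decide)

lemma mp1_13 : Function.minimalPeriod ⇑s1 (13 : Fin 30) = 2 :=
  minimalPeriod_eq_of_iterate s1 (by decide) (by norm_num) (by decide)

lemma mp1_16 : Function.minimalPeriod ⇑s1 (16 : Fin 30) = 1 :=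
  minimalPeriod_eq_of_iterate s1 (by decide) (by norm_num) (by decide)

lemma mp1_17 : Function.minimalPeriod ⇑s1 (17 : Fin 30) = 1 :=
  minimalPeriod_eq_of_iterate s1 (by decide) (by norm_num) (by decide)

lemma mp1_24 : Function.minimalPeriod ⇑s1 (24 : Fin 30) = 1 :=
  minimalPeriod_eq_of_iterate s1 (by decide) (by norm_num) (by decide)

lemma mp1_29 : Function.minimalPeriod ⇑s1 (29 : Fin 30) = 1 :=
  minimalPeriod_eq_of_iterate s1 (by decide) (by norm_num) (by decide)

lemma mp2_0 : Function.minimalPeriod ⇑s2 (0 : Fin 30) = 14 :=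
  minimalPeriod_eq_of_iterate s2 (by decide) (by norm_num) (by decide)

lemma mp2_4 : Function.minimalPeriod ⇑s2 (4 : Fin 30) = 5 :=
  minimalPeriod_eq_of_iterate s2 (by decide) (by norm_num) (by decide)

lemma mp2_1 : Function.minimalPeriod ⇑s2 (1 : Fin 30) = 3 :=
  minimalPeriod_eq_of_iterate s2 (by decide) (by norm_num) (by decide)

lemma mp2_15 : Function.minimalPeriod ⇑s2 (15 : Fin 30) = 2 :=
  minimalPeriod_eq_of_iterate s2 (by decide) (by norm_num) (by decide)

lemma mp2_18 : Function.minimalPeriod ⇑s2 (18 : Fin 30) = 2 :=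
  minimalPeriod_eq_of_iterate s2 (by decide) (by norm_num) (by decide)

lemma mp2_19 : Function.minimalPeriod ⇑s2 (19 : Fin 30) = 2 :=
  minimalPeriod_eq_of_iterate s2 (by decide) (by norm_num) (by decide)

lemma mp2_2 : Function.minimalPeriod ⇑s2 (2 : Fin 30) = 1 :=
  minimalPeriod_eq_of_iterate s2 (by decide) (by norm_num) (by decide)

lemma mp2_12 : Function.minimalPeriod ⇑s2 (12 : Fin 30) = 1 :=
  minimalPeriod_eq_of_iterate s2 (by decide) (by norm_num) (by decide)

lemma mp3_1 : Function.minimalPeriod ⇑s3 (1 : Fin 30) = 14 :=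
  minimalPeriod_eq_of_iterate s3 (by decide) (by norm_num) (by decide)

lemma mp3_2 : Function.minimalPeriod ⇑s3 (2 : Fin 30) = 6 :=
  minimalPeriod_eq_of_iterate s3 (by decide) (by norm_num) (by decide)

lemma mp3_3 : Function.minimalPeriod ⇑s3 (3 : Fin 30) = 6 :=
  minimalPeriod_eq_of_iterate s3 (by decide) (by norm_num) (by decide)

lemma mp3_0 : Function.minimalPeriod ⇑s3 (0 : Fin 30) = 1 :=
  minimalPeriod_eq_of_iterate s3 (by decide) (by norm_num) (by decide)

lemma mp3_21 : Function.minimalPeriod ⇑s3 (21 : Fin 30) = 1 :=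
  minimalPeriod_eq_of_iterate s3 (by decide) (by norm_num) (by decide)

lemma mp3_23 : Function.minimalPeriod ⇑s3 (23 : Fin 30) = 1 :=
  minimalPeriod_eq_of_iterate s3 (by decide) (by norm_num) (by decide)

lemma mp3_26 : Function.minimalPeriod ⇑s3 (26 : Fin 30) = 1 :=
  minimalPeriod_eq_of_iterate s3 (by decide) (by norm_num) (by decide)

set_option maxRecDepth 100000 in
lemma orbitSizes_s1 : orbitSizes s1 = (↑([8, 4, 4, 4, 2, 2, 2, 1, 1, 1, 1] : List ℕ) : Multiset ℕ) := by
  rw [orbitSizes_eq_of_reps s1 [0, 2, 4, 15, 1, 3, 13, 16, 17, 24, 29] (by decide) (by decide)]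
  simp only [List.map_cons, List.map_nil, mp1_0, mp1_2, mp1_4, mp1_15, mp1_1, mp1_3, mp1_13, mp1_16, mp1_17, mp1_24, mp1_29]

set_option maxRecDepth 100000 in
lemma orbitSizes_s2 : orbitSizes s2 = (↑([14, 5, 3, 2, 2, 2, 1, 1] : List ℕ) : Multiset ℕ) := by
  rw [orbitSizes_eq_of_reps s2 [0, 4, 1, 15, 18, 19, 2, 12] (by decide) (by decide)]
  simp only [List.map_cons, List.map_nil, mp2_0, mp2_4, mp2_1, mp2_15, mp2_18, mp2_19, mp2_2, mp2_12]

set_option maxRecDepth 100000 in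
lemma orbitSizes_s3 : orbitSizes s3 = (↑([14, 6, 6, 1, 1, 1, 1] : List ℕ) : Multiset ℕ) := by
  rw [orbitSizes_eq_of_reps s3 [1, 2, 3, 0, 21, 23, 26] (by decide) (by decide)]
  simp only [List.map_cons, List.map_nil, mp3_1, mp3_2, mp3_3, mp3_0, mp3_21, mp3_23, mp3_26]

end Concrete

lemma trans_aux : ∀ x : Fin 30,
    ∃ g ∈ Subgroup.closure ({s1, s2, s3} : Set (Equiv.Perm (Fin 30))), g 0 = x := by
  set S : Set (Equiv.Perm (Fin 30)) := {s1, s2, s3} with hS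
  have hs1 : s1 ∈ Subgroup.closure S := Subgroup.subset_closure (by simp [hS])
  have hs2 : s2 ∈ Subgroup.closure S := Subgroup.subset_closure (by simp [hS])
  set P : Fin 30 → Prop := fun x => ∃ g ∈ Subgroup.closure S, g 0 = x with hP
  have step1 : ∀ x, P x → P (s1 x) := by
    rintro x ⟨g, hg, hgx⟩
    exact ⟨s1 * g, mul_mem hs1 hg, by rw [Equiv.Perm.mul_apply, hgx]⟩
  have step2 : ∀ x, P x → P (s2 x) := by
    rintro x ⟨g, hg, hgx⟩
    exact ⟨s2 * g, mul_mem hs2 hg, by rw [Equiv.Perm.mul_apply, hgx]⟩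
  have h0 : P 0 := ⟨1, one_mem _, rfl⟩
  have h20 : P 20 := step1 _ h0
  have h8 : P 8 := step2 _ h0
  have h27 : P 27 := step1 _ h20
  have h17 : P 17 := step2 _ h20
  have h3 : P 3 := step2 _ h8
  have h21 : P 21 := step1 _ h27
  have h1 : P 1 := step2 _ h27
  have h26 : P 26 := step2 _ h17
  have h18 : P 18 := step1 _ h3
  have h10 : P 10 := step1 _ h21
  have h11 : P 11 := step1 _ h1
  have h22 : P 22 := step1 _ h26
  have h25 : P 25 := step2 _ h26
  have h7 : P 7 := step1 _ h10
  have h6 : P 6 := step2 _ h10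
  have h15 : P 15 := step1 _ h22
  have h23 : P 23 := step2 _ h25
  have h12 : P 12 := step1 _ h7
  have h13 : P 13 := step2 _ h7
  have h4 : P 4 := step1 _ h6
  have h14 : P 14 := step2 _ h6
  have h28 : P 28 := step2 _ h15
  have h2 : P 2 := step1 _ h23
  have h5 : P 5 := step2 _ h23
  have h24 : P 24 := step2 _ h13
  have h19 : P 19 := step1 _ h4
  have h16 : P 16 := step2 _ h14
  have h9 : P 9 := step1 _ h2
  have h29 : P 29 := step2 _ h19
  intro x
  fin_cases x <;> assumption


/-- Realizability of the degree-30 branch-data triple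
`[8, 4, 4, 4, 2, 2, 2, 1, 1, 1, 1]`, `[14, 5, 3, 2, 2, 2, 1, 1]`, `[14, 6, 6, 1, 1, 1, 1]`
by a transitive permutation triple with product the identity. -/
theorem realizable_triple_15 :
    ∃ σ₁ σ₂ σ₃ : Equiv.Perm (Fin 30),
      σ₁ * σ₂ * σ₃ = 1 ∧
      (∀ x y : Fin 30,
        ∃ g ∈ Subgroup.closure ({σ₁, σ₂, σ₃} : Set (Equiv.Perm (Fin 30))), g x = y) ∧
      orbitSizes σ₁ = ({8, 4, 4, 4, 2, 2, 2, 1, 1, 1, 1} : Multiset ℕ) ∧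
      orbitSizes σ₂ = ({14, 5, 3, 2, 2, 2, 1, 1} : Multiset ℕ) ∧
      orbitSizes σ₃ = ({14, 6, 6, 1, 1, 1, 1} : Multiset ℕ) := by
  refine ⟨s1, s2, s3, ?_, ?_, ?_, ?_, ?_⟩
  · decide
  · intro x y
    obtain ⟨gx, hgx, hgx0⟩ := trans_aux x
    obtain ⟨gy, hgy, hgy0⟩ := trans_aux y
    refine ⟨gy * gx⁻¹, mul_mem hgy (inv_mem hgx), ?_⟩
    rw [Equiv.Perm.mul_apply, ← hgx0, ← hgy0, Equiv.Perm.inv_def, Equiv.symm_apply_apply]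
  · rw [orbitSizes_s1]; rfl
  · rw [orbitSizes_s2]; rfl
  · rw [orbitSizes_s3]; rfl
end

section
/- There exist permutations σ₁, σ₂, σ₃ of {1, …, 30} such that σ₁ ∘ σ₂ ∘ σ₃ = id, the subgroup generated by σ₁, σ₂, σ₃ acts transitively on {1, …, 30}, and the multisets of orbit sizes of the cyclic groups generated by σ₁, σ₂, σ₃ are, respectively, {11,4,3,2,2,2,1,1,1,1,1,1}, {9,7,6,3,3,1,1}, and {14,5,4,2,2,2,1}. -/
section Aux

variable {α : Type*} [Fintype α] [DecidableEq α]

lemma aux_mem_orbit_zpowers_iff (σ : Equiv.Perm α) (r x : α) :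
    x ∈ MulAction.orbit (Subgroup.zpowers σ) r ↔ ∃ i : ℤ, (σ ^ i) r = x := by
  constructor
  · rintro ⟨⟨g, hg⟩, rfl⟩
    obtain ⟨i, rfl⟩ := Subgroup.mem_zpowers_iff.mp hg
    exact ⟨i, rfl⟩
  · rintro ⟨i, rfl⟩
    exact ⟨⟨σ ^ i, Subgroup.zpow_mem _ (Subgroup.mem_zpowers σ) i⟩, rfl⟩

lemma aux_zpow_apply_mod {n : ℕ} (σ : Equiv.Perm α) (r : α) (hn : 0 < n)
    (hfix : (σ ^ n) r = r) (i : ℤ) :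
    (σ ^ i) r = (σ ^ (i % (n : ℤ)).toNat) r := by
  have hper : ((σ ^ (n : ℤ)) ^ (i / (n : ℤ))) r = r := by
    have hf : Function.IsFixedPt (⇑(σ ^ n)) r := hfix
    rw [zpow_natCast]; exact hf.perm_zpow (i / (n : ℤ))
  conv_lhs => rw [← Int.emod_add_mul_ediv i n]
  rw [zpow_add, zpow_mul, Equiv.Perm.mul_apply, hper,
    ← zpow_natCast σ (i % (n : ℤ)).toNat,
    Int.toNat_of_nonneg (Int.emod_nonneg i (by exact_mod_cast hn.ne'))]

lemma aux_cycle_map_pow (σ : Equiv.Perm α) {c : List α} (hc : c.map σ = c.rotate 1) (i : ℕ) :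
    c.map (σ ^ i) = c.rotate i := by
  induction i with
  | zero => simp
  | succ n ih =>
    have h1 : c.map (σ ^ (n + 1)) = (c.map (σ ^ n)).map σ := by
      rw [List.map_map]
      exact List.map_congr_left fun x _ => by
        rw [Function.comp_apply, pow_succ', Equiv.Perm.mul_apply]
    rw [h1, ih, List.map_rotate, hc, List.rotate_rotate, add_comm]

lemma aux_cycle_pow_length (σ : Equiv.Perm α) {c : List α} (hc : c.map σ = c.rotate 1)
    {x : α} (hx : x ∈ c) : (σ ^ c.length) x = x := by
  have h := aux_cycle_map_pow σ hc c.length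
  rw [List.rotate_length] at h
  obtain ⟨k, rfl⟩ := List.get_of_mem hx
  have h2 := congrArg (fun l => l[(k : ℕ)]?) h
  simp only [List.getElem?_map, List.getElem?_eq_getElem k.isLt, Option.map_some] at h2
  exact Option.some.inj h2

lemma aux_cycle_orbit (σ : Equiv.Perm α) {c : List α} (hc : c.map σ = c.rotate 1)
    (hne : c ≠ []) {x : α} (hx : x ∈ c) :
    MulAction.orbit (Subgroup.zpowers σ) x = {y | y ∈ c} := by
  have hn : 0 < c.length := List.length_pos_iff.mpr hne
  ext y
  rw [aux_mem_orbit_zpowers_iff]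
  constructor
  · rintro ⟨i, rfl⟩
    rw [aux_zpow_apply_mod σ x hn (aux_cycle_pow_length σ hc hx) i]
    have hmem := List.mem_map_of_mem (f := ⇑(σ ^ (i % (c.length : ℤ)).toNat : Equiv.Perm α)) hx
    rw [aux_cycle_map_pow σ hc] at hmem
    exact (List.mem_rotate).mp hmem
  · intro hy
    obtain ⟨k, hxk⟩ := List.get_of_mem hx
    obtain ⟨j, hyj⟩ := List.get_of_mem hy
    refine ⟨(((j : ℕ) + c.length - (k : ℕ) : ℕ) : ℤ), ?_⟩
    set m := (j : ℕ) + c.length - (k : ℕ) with hm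
    rw [zpow_natCast]
    have h := aux_cycle_map_pow σ hc m
    have h2 := congrArg (fun l => l[(k : ℕ)]?) h
    have hk1 : (k : ℕ) < c.length := k.isLt
    have hkr : (k : ℕ) < (c.rotate m).length := by simpa using hk1
    simp only [List.getElem?_map, List.getElem?_eq_getElem hk1, List.getElem?_eq_getElem hkr,
      Option.map_some] at h2
    have h3 := Option.some.inj h2
    change (σ ^ m) (c.get ⟨(k : ℕ), hk1⟩) = (c.rotate m).get ⟨(k : ℕ), hkr⟩ at h3
    rw [List.get_rotate] at h3
    have hidx : ((k : ℕ) + m) % c.length = (j : ℕ) := by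
      have hle : (k : ℕ) + m = (j : ℕ) + c.length := by omega
      rw [hle, Nat.add_mod_right, Nat.mod_eq_of_lt j.isLt]
    rw [show (⟨(k : ℕ), hk1⟩ : Fin c.length) = k from rfl, hxk] at h3
    rw [h3, ← hyj]
    congr 1
    exact Fin.ext hidx

lemma aux_natCard_cycle (σ : Equiv.Perm α) {c : List α} (hc : c.map σ = c.rotate 1)
    (hne : c ≠ []) (hnd : c.Nodup) {x : α} (hx : x ∈ c) :
    Nat.card (MulAction.orbit (Subgroup.zpowers σ) x) = c.length := by
  rw [aux_cycle_orbit σ hc hne hx]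
  have : {y | y ∈ c} = ↑c.toFinset := by ext z; simp
  rw [this, Nat.card_coe_set_eq, Set.ncard_coe_finset, List.toFinset_card_of_nodup hnd]

lemma aux_orbitSizes_eq_of_cycles [Inhabited α] (σ : Equiv.Perm α) (L : List (List α))
    (hne : ∀ c ∈ L, c ≠ [])
    (hrot : ∀ c ∈ L, c.map σ = c.rotate 1)
    (hnd : ∀ c ∈ L, c.Nodup)
    (hcov : ∀ x : α, ∃ c ∈ L, x ∈ c)
    (hdisj : L.Pairwise fun c d => ∀ x ∈ c, x ∉ d) :
    orbitSizes σ = ↑(L.map List.length) := by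
  classical
  letI F := Fintype.ofFinite (MulAction.orbitRel.Quotient (Subgroup.zpowers σ) α)
  have hhead : ∀ c ∈ L, c.head! ∈ c := fun c hc =>
    List.head!_mem_self (hne c hc)
  have hnodup : (L.map fun c =>
      (Quotient.mk'' c.head! : MulAction.orbitRel.Quotient (Subgroup.zpowers σ) α)).Nodup := by
    refine List.pairwise_map.mpr (hdisj.imp_of_mem ?_)
    intro c d hcL hdL hR hmk
    have hrel : c.head! ∈ MulAction.orbit (Subgroup.zpowers σ) d.head! :=
      MulAction.orbitRel_apply.mp (Quotient.eq''.mp hmk)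
    rw [aux_cycle_orbit σ (hrot d hdL) (hne d hdL) (hhead d hdL)] at hrel
    exact hR c.head! (hhead c hcL) hrel
  have huniv : (Finset.univ : Finset (MulAction.orbitRel.Quotient (Subgroup.zpowers σ) α))
      = ⟨↑(L.map fun c => (Quotient.mk'' c.head! :
          MulAction.orbitRel.Quotient (Subgroup.zpowers σ) α)), by exact_mod_cast hnodup⟩ := by
    symm
    rw [Finset.eq_univ_iff_forall]
    intro q
    induction q using Quotient.inductionOn' with
    | h x =>
      obtain ⟨c, hcL, hxc⟩ := hcov x
      have hx : x ∈ MulAction.orbit (Subgroup.zpowers σ) c.head! := by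
        rw [aux_cycle_orbit σ (hrot c hcL) (hne c hcL) (hhead c hcL)]
        exact hxc
      have hq : (Quotient.mk'' x : MulAction.orbitRel.Quotient (Subgroup.zpowers σ) α)
          = Quotient.mk'' c.head! := Quotient.sound' (MulAction.orbitRel_apply.mpr hx)
      rw [Finset.mem_mk, Multiset.mem_coe, hq]
      exact List.mem_map.mpr ⟨c, hcL, rfl⟩
  unfold orbitSizes
  rw [huniv]
  simp only [Multiset.map_coe, List.map_map, Multiset.coe_eq_coe]
  refine List.Perm.of_eq (List.map_congr_left ?_)
  intro c hcL
  simp only [Function.comp_apply]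
  rw [MulAction.orbitRel.Quotient.orbit_mk]
  exact aux_natCard_cycle σ (hrot c hcL) (hne c hcL) (hnd c hcL) (hhead c hcL)

end Aux

private def p1 : Equiv.Perm (Fin 30) :=
  ⟨![4, 1, 27, 9, 17, 21, 20, 7, 26, 2, 10, 14, 12, 22, 29, 16, 23, 5, 0, 19, 6, 3, 13, 24, 15, 18, 8, 25, 28, 11],
   ![18, 1, 9, 21, 0, 17, 20, 7, 26, 3, 10, 29, 12, 22, 11, 24, 15, 4, 25, 19, 6, 5, 13, 16, 23, 27, 8, 2, 28, 14],
   by show ∀ x, _; decide, by show ∀ x, _; decide⟩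

private def p2 : Equiv.Perm (Fin 30) :=
  ⟨![1, 3, 4, 22, 14, 16, 23, 27, 11, 12, 6, 26, 18, 0, 2, 25, 7, 9, 15, 13, 28, 21, 19, 5, 20, 24, 8, 10, 17, 29],
   ![13, 0, 14, 1, 2, 23, 10, 16, 26, 17, 27, 8, 9, 19, 4, 18, 5, 28, 12, 22, 24, 21, 3, 6, 25, 15, 11, 7, 20, 29],
   by show ∀ x, _; decide, by show ∀ x, _; decide⟩

private def p3 : Equiv.Perm (Fin 30) :=
  ⟨![12, 0, 17, 21, 13, 28, 24, 16, 11, 1, 27, 29, 9, 3, 8, 25, 18, 2, 15, 22, 10, 23, 19, 5, 6, 7, 26, 14, 20, 4],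
   ![1, 9, 17, 13, 29, 23, 24, 25, 14, 12, 20, 8, 0, 4, 27, 18, 7, 2, 16, 22, 28, 3, 19, 21, 6, 15, 26, 10, 5, 11],
   by show ∀ x, _; decide, by show ∀ x, _; decide⟩

set_option maxRecDepth 8000

/-- Realizability of the degree-30 branch-data triple
`[11, 4, 3, 2, 2, 2, 1, 1, 1, 1, 1, 1]`, `[9, 7, 6, 3, 3, 1, 1]`, `[14, 5, 4, 2, 2, 2, 1]`
by a transitive permutation triple with product the identity. -/
theorem realizable_triple_17 :
    ∃ σ₁ σ₂ σ₃ : Equiv.Perm (Fin 30),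
      σ₁ * σ₂ * σ₃ = 1 ∧
      (∀ x y : Fin 30,
        ∃ g ∈ Subgroup.closure ({σ₁, σ₂, σ₃} : Set (Equiv.Perm (Fin 30))), g x = y) ∧
      orbitSizes σ₁ = ({11, 4, 3, 2, 2, 2, 1, 1, 1, 1, 1, 1} : Multiset ℕ) ∧
      orbitSizes σ₂ = ({9, 7, 6, 3, 3, 1, 1} : Multiset ℕ) ∧
      orbitSizes σ₃ = ({14, 5, 4, 2, 2, 2, 1} : Multiset ℕ) := by
  refine ⟨p1, p2, p3, by decide, ?_, ?_, ?_, ?_⟩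
  · have hm1 : p1 ∈ Subgroup.closure ({p1, p2, p3} : Set (Equiv.Perm (Fin 30))) :=
      Subgroup.subset_closure (by simp)
    have hm2 : p2 ∈ Subgroup.closure ({p1, p2, p3} : Set (Equiv.Perm (Fin 30))) :=
      Subgroup.subset_closure (by simp)
    have reach : ∀ x : Fin 30,
        ∃ g ∈ Subgroup.closure ({p1, p2, p3} : Set (Equiv.Perm (Fin 30))), g 0 = x := by
      intro x
      fin_cases x
      · exact ⟨1, one_mem _, by decide⟩
      · exact ⟨p2, hm2, by decide⟩
      · exact ⟨p2 * p2 * p1, mul_mem (mul_mem (hm2) hm2) hm1, by decide⟩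
      · exact ⟨p2 * p2, mul_mem (hm2) hm2, by decide⟩
      · exact ⟨p1, hm1, by decide⟩
      · exact ⟨p1 * p1 * p1, mul_mem (mul_mem (hm1) hm1) hm1, by decide⟩
      · exact ⟨p2 * p2 * p1 * p2 * p2 * p1, mul_mem (mul_mem (mul_mem (mul_mem (mul_mem (hm2) hm2) hm1) hm2) hm2) hm1, by decide⟩
      · exact ⟨p2 * p2 * p1 * p1 * p1, mul_mem (mul_mem (mul_mem (mul_mem (hm2) hm2) hm1) hm1) hm1, by decide⟩
      · exact ⟨p1 * p2 * p1 * p1 * p2 * p1, mul_mem (mul_mem (mul_mem (mul_mem (mul_mem (hm1) hm2) hm1) hm1) hm2) hm1, by decide⟩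
      · exact ⟨p2 * p1 * p1, mul_mem (mul_mem (hm2) hm1) hm1, by decide⟩
      · exact ⟨p2 * p1 * p2 * p2 * p1, mul_mem (mul_mem (mul_mem (mul_mem (hm2) hm1) hm2) hm2) hm1, by decide⟩
      · exact ⟨p1 * p1 * p2 * p1, mul_mem (mul_mem (mul_mem (hm1) hm1) hm2) hm1, by decide⟩
      · exact ⟨p2 * p2 * p1 * p1, mul_mem (mul_mem (mul_mem (hm2) hm2) hm1) hm1, by decide⟩
      · exact ⟨p1 * p2 * p2 * p2, mul_mem (mul_mem (mul_mem (hm1) hm2) hm2) hm2, by decide⟩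
      · exact ⟨p2 * p1, mul_mem (hm2) hm1, by decide⟩
      · exact ⟨p2 * p2 * p2 * p2 * p1 * p1, mul_mem (mul_mem (mul_mem (mul_mem (mul_mem (hm2) hm2) hm2) hm2) hm1) hm1, by decide⟩
      · exact ⟨p2 * p1 * p1 * p1, mul_mem (mul_mem (mul_mem (hm2) hm1) hm1) hm1, by decide⟩
      · exact ⟨p1 * p1, mul_mem (hm1) hm1, by decide⟩
      · exact ⟨p2 * p2 * p2 * p1 * p1, mul_mem (mul_mem (mul_mem (mul_mem (hm2) hm2) hm2) hm1) hm1, by decide⟩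
      · exact ⟨p2 * p2 * p2 * p2, mul_mem (mul_mem (mul_mem (hm2) hm2) hm2) hm2, by decide⟩
      · exact ⟨p2 * p1 * p1 * p2 * p1 * p1 * p1, mul_mem (mul_mem (mul_mem (mul_mem (mul_mem (mul_mem (hm2) hm1) hm1) hm2) hm1) hm1) hm1, by decide⟩
      · exact ⟨p1 * p1 * p1 * p1, mul_mem (mul_mem (mul_mem (hm1) hm1) hm1) hm1, by decide⟩
      · exact ⟨p2 * p2 * p2, mul_mem (mul_mem (hm2) hm2) hm2, by decide⟩
      · exact ⟨p1 * p2 * p1 * p1 * p1, mul_mem (mul_mem (mul_mem (mul_mem (hm1) hm2) hm1) hm1) hm1, by decide⟩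
      · exact ⟨p1 * p1 * p2 * p1 * p1 * p1, mul_mem (mul_mem (mul_mem (mul_mem (mul_mem (hm1) hm1) hm2) hm1) hm1) hm1, by decide⟩
      · exact ⟨p1 * p1 * p2 * p2 * p1, mul_mem (mul_mem (mul_mem (mul_mem (hm1) hm1) hm2) hm2) hm1, by decide⟩
      · exact ⟨p2 * p1 * p1 * p2 * p1, mul_mem (mul_mem (mul_mem (mul_mem (hm2) hm1) hm1) hm2) hm1, by decide⟩
      · exact ⟨p1 * p2 * p2 * p1, mul_mem (mul_mem (mul_mem (hm1) hm2) hm2) hm1, by decide⟩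
      · exact ⟨p2 * p2 * p1 * p1 * p2 * p1 * p1 * p1, mul_mem (mul_mem (mul_mem (mul_mem (mul_mem (mul_mem (mul_mem (hm2) hm2) hm1) hm1) hm2) hm1) hm1) hm1, by decide⟩
      · exact ⟨p1 * p2 * p1, mul_mem (mul_mem (hm1) hm2) hm1, by decide⟩
    intro x y
    obtain ⟨gx, hgx, hx⟩ := reach x
    obtain ⟨gy, hgy, hy⟩ := reach y
    refine ⟨gy * gx⁻¹, mul_mem hgy (inv_mem hgx), ?_⟩
    rw [Equiv.Perm.mul_apply, ← hx, Equiv.Perm.inv_def, Equiv.symm_apply_apply, hy]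
  · have e := aux_orbitSizes_eq_of_cycles p1
      [[0, 4, 17, 5, 21, 3, 9, 2, 27, 25, 18],
       [15, 16, 23, 24],
       [11, 14, 29],
       [6, 20],
       [8, 26],
       [13, 22],
       [1],
       [7],
       [10],
       [12],
       [19],
       [28]]
      (by decide) (by decide) (by decide) (by decide) (by decide)
    rw [e]; rfl
  · have e := aux_orbitSizes_eq_of_cycles p2
      [[9, 12, 18, 15, 25, 24, 20, 28, 17],
       [5, 16, 7, 27, 10, 6, 23],
       [0, 1, 3, 22, 19, 13],
       [2, 4, 14],
       [8, 11, 26],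
       [21],
       [29]]
      (by decide) (by decide) (by decide) (by decide) (by decide)
    rw [e]; rfl
  · have e := aux_orbitSizes_eq_of_cycles p3
      [[3, 21, 23, 5, 28, 20, 10, 27, 14, 8, 11, 29, 4, 13],
       [7, 16, 18, 15, 25],
       [0, 12, 9, 1],
       [2, 17],
       [6, 24],
       [19, 22],
       [26]]
      (by decide) (by decide) (by decide) (by decide) (by decide)
    rw [e]; rfl
end
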